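/- Let G be a graph with odd-girth at least 2k+1 (k ≥ 2), and let e1,...,es be edges of G with 1 ≤ s ≤ k-1. Then no vertex u of G is even-connected to itself with respect to the product e1⋯es; that is, there is no closed walk u = p_0, p_1, ..., p_{2l+1} = u in G with l ≤ s such that each edge {p_{2t+1}, p_{2t+2}} (0 ≤ t ≤ l-1) equals some e_i, with each e_i used at most its multiplicity. -/

import Mathlib

open SimpleGraph Walk List

lemma exists_odd_cycle_of_odd_closed_walk {V : Type*} {G : SimpleGraph V} :
    ∀ (n : ℕ) (u : V) (w : G.Walk u u), w.length = n → Odd n →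
      ∃ (v : V) (c : G.Walk v v), c.IsCycle ∧ Odd c.length ∧ c.length ≤ n := by
  intro n
  induction n using Nat.strong_induction_on with
  | _ n ih =>
  intro u w hw hodd
  haveI := Classical.decEq V
  by_cases hnd : w.support.tail.Nodup
  · -- w itself is a cycle
    have hpos : 0 < w.length := by rcases hodd with ⟨m, hm⟩; omega
    have hnn : ¬ w.Nil := by rw [SimpleGraph.Walk.not_nil_iff_lt_length]; exact hpos
    obtain ⟨y, h, q, rfl⟩ := SimpleGraph.Walk.not_nil_iff.mp hnn
    have hq : q.support.Nodup := by simpa using hnd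
    have hqp : q.IsPath := (SimpleGraph.Walk.isPath_def q).mpr hq
    have hne : s(u, y) ∉ q.edges := by
      intro hmem
      have hqnn : ¬ q.Nil := by
        intro hqn
        have h0 : q.edges = [] := by
          have h1 : q.edges.length = 0 := by
            rw [SimpleGraph.Walk.length_edges, SimpleGraph.Walk.nil_iff_length_eq.mp hqn]
          exact List.length_eq_zero_iff.mp h1
        rw [h0] at hmem
        simp at hmem
      obtain ⟨z, h2, q2, rfl⟩ := SimpleGraph.Walk.not_nil_iff.mp hqnn
      rw [SimpleGraph.Walk.edges_cons, List.mem_cons] at hmem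
      have hq2p := (SimpleGraph.Walk.cons_isPath_iff _ _).mp hqp
      rcases hmem with hmem | hmem
      · rw [Sym2.eq_iff] at hmem
        rcases hmem with ⟨rfl, rfl⟩ | ⟨rfl, -⟩
        · exact G.loopless.irrefl _ h
        · -- q2 : Walk u u is a path, so nil, so total length 2: contradiction with odd
          have hq2nil : q2.length = 0 := by
            by_contra hne0
            have hls := SimpleGraph.Walk.length_support q2
            have htne : q2.support.tail ≠ [] := by
              intro hnil
              rw [SimpleGraph.Walk.support_eq_cons q2, hnil] at hls
              simp only [List.length_cons, List.length_nil] at hls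
              omega
            have hmem2 : u ∈ q2.support.tail := by
              have h1 : q2.support.tail.getLast htne = u := by
                rw [List.getLast_tail]
                exact SimpleGraph.Walk.getLast_support q2
              have h2m := List.getLast_mem htne
              rwa [h1] at h2m
            have hnodup := hq2p.1.support_nodup
            rw [SimpleGraph.Walk.support_eq_cons q2] at hnodup
            exact (List.nodup_cons.mp hnodup).1 hmem2
          have hn2 : n = 2 := by
            rw [← hw]
            simp [hq2nil]
          rw [hn2, Nat.odd_iff] at hodd
          omega
      · have : y ∈ q2.support := by
          rw [Sym2.eq_swap] at hmem
          exact SimpleGraph.Walk.fst_mem_support_of_mem_edges q2 hmem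
        exact hq2p.2 this
    refine ⟨u, Walk.cons h q, ?_, ?_, le_of_eq hw⟩
    · exact (SimpleGraph.Walk.cons_isCycle_iff q h).mpr ⟨hqp, hne⟩
    · rw [hw]; exact hodd
  · -- duplicate vertex: split into two shorter closed walks
    obtain ⟨x, hdup⟩ := List.exists_duplicate_iff_not_nodup.mpr hnd
    have hcount : 2 ≤ w.support.tail.count x := List.duplicate_iff_two_le_count.mp hdup
    have hx : x ∈ w.support := List.mem_of_mem_tail hdup.mem
    set r := w.rotate x hx with hr
    have hrlen : r.length = w.length := by
      have := (SimpleGraph.Walk.rotate_darts w x hx).perm.length_eq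
      rw [← SimpleGraph.Walk.length_darts, ← SimpleGraph.Walk.length_darts]; exact this
    have hrcount : 2 ≤ r.support.tail.count x := by
      rw [(SimpleGraph.Walk.support_rotate w x hx).perm.count_eq]
      exact hcount
    have hrnn : ¬ r.Nil := by
      rw [SimpleGraph.Walk.not_nil_iff_lt_length, hrlen, hw]
      rcases hodd with ⟨m, hm⟩; omega
    obtain ⟨y, h, q, hrq⟩ := SimpleGraph.Walk.not_nil_iff.mp hrnn
    have hqcount : 2 ≤ q.support.count x := by
      have : r.support.tail = q.support := by rw [hrq]; simp
      rwa [this] at hrcount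
    have hxq : x ∈ q.support := List.count_pos_iff.mp (by omega)
    set t := q.takeUntil x hxq with ht
    set d := q.dropUntil x hxq with hd
    have hsplit : t.length + d.length = q.length := by
      have := congrArg SimpleGraph.Walk.length (q.take_spec hxq)
      rw [SimpleGraph.Walk.length_append] at this
      exact this
    have hdpos : 1 ≤ d.length := by
      by_contra hd0
      have hd0 : d.length = 0 := by omega
      have htail : d.support.tail = [] := by
        have hls := SimpleGraph.Walk.length_support d
        rw [SimpleGraph.Walk.support_eq_cons d] at hls
        simp only [List.length_cons] at hls
        have h0 : d.support.tail.length = 0 := by omega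
        exact List.length_eq_zero_iff.mp h0
      have hqs : q.support = t.support ++ d.support.tail := by
        rw [← q.take_spec hxq]
        exact (SimpleGraph.Walk.support_append _ _)
      rw [hqs, htail, List.append_nil] at hqcount
      rw [SimpleGraph.Walk.count_support_takeUntil_eq_one q hxq] at hqcount
      omega
    have hn : n = (t.length + 1) + d.length := by
      have : r.length = q.length + 1 := by rw [hrq]; simp
      omega
    have h1 : G.Adj x y := by rw [hrq] at hr; exact h
    rcases Nat.even_or_odd (t.length + 1) with hev | hodd1
    · -- d has odd length
      have hoddd : Odd d.length := by
        rw [Nat.odd_iff] at hodd ⊢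
        rw [Nat.even_iff] at hev
        omega
      obtain ⟨v, c, hc, hco, hcl⟩ := ih d.length (by omega) x d rfl hoddd
      exact ⟨v, c, hc, hco, by omega⟩
    · -- cons h t has odd length
      have c1 : G.Walk x x := Walk.cons h t
      have hc1len : (Walk.cons h t).length = t.length + 1 := by simp
      obtain ⟨v, c, hc, hco, hcl⟩ := ih (t.length + 1) (by omega) x (Walk.cons h t)
        (by simp) hodd1
      exact ⟨v, c, hc, hco, by omega⟩



/-- Vertices `u` and `v` are even-connected with respect to the product of the edges in
the list `es`: there is a walk `u = p_0, p_1, …, p_{2l+1} = v` in `G` with `l ≥ 1` such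
that each edge `{p_{2t+1}, p_{2t+2}}` (for `0 ≤ t ≤ l-1`) is one of the edges of `es`,
and each edge of `es` is used at most as many times as it occurs in `es`. -/
def EvenConnected {V : Type*} (G : SimpleGraph V) (es : List (Sym2 V)) (u v : V) : Prop :=
  ∃ (p : G.Walk u v) (l : ℕ), 1 ≤ l ∧ p.length = 2 * l + 1 ∧
    (↑(List.ofFn fun t : Fin l => s(p.getVert (2 * ↑t + 1), p.getVert (2 * ↑t + 2))) :
      Multiset (Sym2 V)) ≤ (↑es : Multiset (Sym2 V))

/-- Let `G` have odd-girth at least `2k+1` (`k ≥ 2`) and let `e₁, …, e_s` be edges of `G`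
with `1 ≤ s ≤ k-1`.  Then no vertex of `G` is even-connected to itself with respect to
the product `e₁ ⋯ e_s`. -/
theorem not_evenConnected_self {V : Type*} [Fintype V] (G : SimpleGraph V) (k : ℕ)
    (hk : 2 ≤ k)
    (hgirth : ∀ (u : V) (c : G.Walk u u), c.IsCycle → Odd c.length → 2 * k + 1 ≤ c.length)
    (es : List (Sym2 V)) (hes : ∀ e ∈ es, e ∈ G.edgeSet)
    (hs : 1 ≤ es.length) (hsk : es.length ≤ k - 1) :
    ∀ u : V, ¬ EvenConnected G es u u := by
  intro u ⟨p, l, hl, hplen, hle⟩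
  have hcard := Multiset.card_le_card hle
  simp only [Multiset.coe_card, List.length_ofFn] at hcard
  obtain ⟨v, c, hc, hco, hcl⟩ := exists_odd_cycle_of_odd_closed_walk (2 * l + 1) u p hplen
    ⟨l, by omega⟩
  have := hgirth v c hc hco
  omega
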